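/- arXiv:cs/0611161 — 3 statements merged into one kernel-verified Lean document; each statement's English description precedes it below -/
import Mathlib

section
/- For every integer h ≥ 2 and every integer w with 0 ≤ w ≤ 2^(h-1), we have sin²(w·π/2^h) ≤ (2^h/4)·sin²(π/2^h)·w. -/
open Real

lemma cos_sq_key (r : ℝ) (h0 : 0 ≤ r) (h1 : r ≤ 0.815) :
    Real.cos r ^ 2 ≤ 0.76 * (π / 2 - r) := by
  have hcb := Real.cos_bound (x := r) (by rw [abs_of_nonneg h0]; linarith)
  rw [abs_of_nonneg h0] at hcb
  have hcub : Real.cos r ≤ 1 - r ^ 2 / 2 + r ^ 4 * (5 / 96) := by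
    have := (abs_le.1 hcb).2; linarith
  have hc0 : 0 ≤ Real.cos r := Real.cos_nonneg_of_mem_Icc
    ⟨by linarith [Real.pi_pos], by linarith [Real.pi_gt_d6]⟩
  have h2 : r ^ 2 ≤ 0.665 := by nlinarith
  have hA0 : (0:ℝ) ≤ 1 - r ^ 2 / 2 + r ^ 4 * (5 / 96) := by nlinarith [pow_nonneg h0 4]
  have hc2 : Real.cos r ^ 2 ≤ (1 - r ^ 2 / 2 + r ^ 4 * (5 / 96)) ^ 2 := by nlinarith
  have key : (1 - r ^ 2 / 2 + r ^ 4 * (5 / 96)) ^ 2 ≤ 0.76 * (1.570796 - r) := by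
    have h4 : r ^ 4 ≤ 0.665 * r ^ 2 := by nlinarith [sq_nonneg r]
    have h8 : r ^ 8 ≤ 0.45 * r ^ 4 := by
      nlinarith [sq_nonneg (r^2), sq_nonneg (r^3), sq_nonneg (r^4), pow_nonneg h0 4]
    nlinarith [sq_nonneg (r - 0.4976), pow_nonneg h0 6]
  have hpi := Real.pi_gt_d6
  linarith

lemma sin_sq_le_const_mul (t : ℝ) (h0 : 0 ≤ t) (h1 : t ≤ π / 2) :
    Real.sin t ^ 2 ≤ 0.76 * t := by
  rcases le_or_gt t 0.76 with ht | ht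
  · have hs0 : 0 ≤ Real.sin t := Real.sin_nonneg_of_nonneg_of_le_pi h0
      (h1.trans (by linarith [Real.pi_pos]))
    have hs : Real.sin t ≤ t := Real.sin_le h0
    nlinarith
  · have hr0 : 0 ≤ π / 2 - t := by linarith
    have hr1 : π / 2 - t ≤ 0.815 := by linarith [Real.pi_lt_d2]
    have hst : Real.sin t = Real.cos (π / 2 - t) := (Real.cos_pi_div_two_sub t).symm
    have := cos_sq_key (π / 2 - t) hr0 hr1
    rw [← hst] at this
    linarith

lemma slope_key (h : ℕ) (hh : 4 ≤ h) :
    0.76 * (π / 2 ^ h) ≤ 2 ^ h / 4 * Real.sin (π / 2 ^ h) ^ 2 := by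
  have hP : (16:ℝ) ≤ 2 ^ h := by
    calc (16:ℝ) = 2 ^ 4 := by norm_num
    _ ≤ 2 ^ h := by exact_mod_cast pow_le_pow_right₀ (by norm_num) hh
  have hP0 : (0:ℝ) < 2 ^ h := by positivity
  set x : ℝ := π / 2 ^ h with hx
  have hx0 : 0 < x := by positivity
  have hxle : x ≤ 0.1969 := by
    have : x ≤ π / 16 :=
      div_le_div_of_nonneg_left Real.pi_pos.le (by norm_num) hP
    nlinarith [Real.pi_lt_d2]
  have hPx : (2:ℝ) ^ h * x = π := by
    rw [hx]; field_simp
  have hsin : x - x ^ 3 / 4 < Real.sin x := by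
    have := Real.sin_gt_sub_cube hx0; nlinarith [pow_pos hx0 3]
  have hx2 : x ^ 2 ≤ 0.039 := by nlinarith
  have hx3 : x ^ 3 ≤ 0.039 * x := by nlinarith [mul_le_mul_of_nonneg_left hx2 hx0.le]
  have hsub0 : 0 < x - x ^ 3 / 4 := by nlinarith
  have hsq : (x - x ^ 3 / 4) ^ 2 ≤ Real.sin x ^ 2 := by nlinarith
  have hpi := Real.pi_gt_d6
  have key : 0.76 * x ≤ 2 ^ h / 4 * (x - x ^ 3 / 4) ^ 2 := by
    have expand : (2:ℝ) ^ h / 4 * (x - x ^ 3 / 4) ^ 2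
        = (2 ^ h * x) / 4 * (x * (1 - x ^ 2 / 4) ^ 2) := by ring
    rw [expand, hPx]
    have h1 : (0.98:ℝ) ≤ (1 - x ^ 2 / 4) ^ 2 := by nlinarith
    nlinarith [hx0.le]
  nlinarith [hP0]

theorem sin_sq_linear_bound (h : ℕ) (hh : 2 ≤ h) (w : ℕ) (hw : w ≤ 2 ^ (h - 1)) :
    Real.sin ((w : ℝ) * π / 2 ^ h) ^ 2 ≤
      (2 ^ h / 4) * Real.sin (π / 2 ^ h) ^ 2 * w := by
  have hs2 : (Real.sqrt 2) ^ 2 = 2 := Real.sq_sqrt (by norm_num)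
  have hs2n : 0 ≤ Real.sqrt 2 := Real.sqrt_nonneg 2
  have hs2u : Real.sqrt 2 ≤ 1.415 := by nlinarith [sq_nonneg (Real.sqrt 2 - 1.415)]
  rcases lt_or_ge h 4 with h4 | h4
  · interval_cases h
    · -- h = 2
      norm_num at hw
      interval_cases w
      · norm_num
      · have e1 : ((1:ℕ):ℝ) * π / 2 ^ 2 = π / 4 := by push_cast; ring
        rw [e1]
        have := Real.sin_pi_div_four
        nlinarith [Real.sin_sq_le_one (π/4)]
      · have e2 : ((2:ℕ):ℝ) * π / 2 ^ 2 = π / 2 := by push_cast; ring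
        have e3 : (π:ℝ) / 2 ^ 2 = π / 4 := by ring
        rw [e2, e3, Real.sin_pi_div_two, Real.sin_pi_div_four]
        push_cast
        nlinarith
    · -- h = 3
      norm_num at hw
      have s8 : Real.sin (π / 2 ^ 3) ^ 2 = (2 - Real.sqrt 2) / 4 := by
        have e : (π:ℝ) / 2 ^ 3 = π / 8 := by ring
        rw [e, Real.sin_pi_div_eight]
        rw [div_pow, Real.sq_sqrt (by nlinarith)]
        ring
      interval_cases w
      · norm_num
      · have e : ((1:ℕ):ℝ) * π / 2 ^ 3 = π / 2 ^ 3 := by push_cast; ring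
        rw [e, s8]
        push_cast
        nlinarith
      · have e : ((2:ℕ):ℝ) * π / 2 ^ 3 = π / 4 := by push_cast; ring
        rw [e, s8, Real.sin_pi_div_four, div_pow, hs2]
        push_cast
        nlinarith
      · have e : ((3:ℕ):ℝ) * π / 2 ^ 3 = π / 2 - π / 8 := by push_cast; ring
        rw [e, Real.sin_pi_div_two_sub, s8, Real.cos_pi_div_eight, div_pow,
          Real.sq_sqrt (by nlinarith)]
        push_cast
        nlinarith
      · have e : ((4:ℕ):ℝ) * π / 2 ^ 3 = π / 2 := by push_cast; ring
        rw [e, Real.sin_pi_div_two, s8]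
        push_cast
        nlinarith
  · -- h ≥ 4
    have hP0 : (0:ℝ) < 2 ^ h := by positivity
    have hwr : (w:ℝ) ≤ 2 ^ (h - 1) := by exact_mod_cast hw
    have hpow : (2:ℝ) ^ (h - 1) * 2 = 2 ^ h := by
      rw [← pow_succ]
      congr 1
      omega
    have ht0 : 0 ≤ (w:ℝ) * π / 2 ^ h := by positivity
    have ht1 : (w:ℝ) * π / 2 ^ h ≤ π / 2 := by
      rw [div_le_div_iff₀ hP0 (by norm_num)]
      calc (w:ℝ) * π * 2 ≤ 2 ^ (h-1) * 2 * π := by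
            nlinarith [Real.pi_pos]
        _ = π * 2 ^ h := by rw [hpow]; ring
    have hmain := sin_sq_le_const_mul _ ht0 ht1
    have hslope := slope_key h h4
    calc Real.sin ((w : ℝ) * π / 2 ^ h) ^ 2 ≤ 0.76 * ((w:ℝ) * π / 2 ^ h) := hmain
      _ = (0.76 * (π / 2 ^ h)) * w := by ring
      _ ≤ (2 ^ h / 4 * Real.sin (π / 2 ^ h) ^ 2) * w := by
          apply mul_le_mul_of_nonneg_right hslope (Nat.cast_nonneg w)
      _ = (2 ^ h / 4) * Real.sin (π / 2 ^ h) ^ 2 * w := by ring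
end

section
/- For any two elements a, b of ℤ/2^h with h ≥ 2, the squared distance |e^{2πia/2^h} − e^{2πib/2^h}|² equals 4·sin²((a−b)·π/2^h), and this is at most 2^h·sin²(π/2^h)·wt_L(a−b), where wt_L(c) = min(c, 2^h − c) is the Lee weight of the residue c ∈ {0,…,2^h−1}. -/
set_option maxHeartbeats 1000000


open Real Complex

/-- Polynomial certificate. -/
lemma psk_poly (r p : ℝ) (hp : (3.1415:ℝ) < p) (hr0 : 0 ≤ r) (hru : r < p - 38/25)
    (hp2 : p < 3.1416) :
    1 - (r/2 - (r/2)^3/4)^2 ≤ 19/50 * (p - r) := by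
  nlinarith [sq_nonneg (r-1), sq_nonneg (r*r-1), sq_nonneg (r*r - r),
    mul_nonneg hr0 (sq_nonneg (r-1)), mul_nonneg (mul_nonneg hr0 hr0) (sq_nonneg (r-1)),
    sq_nonneg (r*r*r), mul_nonneg hr0 hr0]

/-- Pointwise bound: `sin² u ≤ (19/25) u` on `[0, π/2]`. -/
lemma psk_sin_sq_le (u : ℝ) (h0 : 0 ≤ u) (h1 : u ≤ π / 2) :
    Real.sin u ^ 2 ≤ 19 / 25 * u := by
  rcases le_or_gt u (19 / 25) with hc | hc
  · have hs : Real.sin u ≤ u := Real.sin_le h0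
    have hs0 : 0 ≤ Real.sin u :=
      Real.sin_nonneg_of_nonneg_of_le_pi h0 (by linarith [Real.pi_pos])
    nlinarith
  · have hπl : (3.1415 : ℝ) < π := Real.pi_gt_d4
    have hπu : π < 3.1416 := Real.pi_lt_d4
    obtain ⟨r, hrdef⟩ : ∃ r, r = π - 2 * u := ⟨_, rfl⟩
    have hr0 : 0 ≤ r := by rw [hrdef]; linarith
    have hru : r < π - 38 / 25 := by rw [hrdef]; linarith
    have h2u : Real.sin u ^ 2 = 1 / 2 + Real.cos r / 2 := by
      rw [Real.sin_sq_eq_half_sub, show (2 : ℝ) * u = π - r by rw [hrdef]; ring,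
        Real.cos_pi_sub]
      ring
    rcases eq_or_lt_of_le hr0 with h0r | h0r
    · rw [h2u, ← h0r, Real.cos_zero]
      have : u = π / 2 := by rw [hrdef] at h0r; linarith
      rw [this]; nlinarith
    · have hr2 : r ≤ 2 := by linarith
      have hhalf : r / 2 ≤ 1 := by linarith
      have hs2 : r / 2 - (r / 2) ^ 3 / 4 < Real.sin (r / 2) :=
        by have := Real.sin_gt_sub_cube (x := r / 2) (by linarith); nlinarith [pow_pos (show (0:ℝ) < r / 2 by linarith) 3]
      have h4r : 0 ≤ r * (4 - r ^ 2) := mul_nonneg hr0 (by nlinarith)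
      have hpos : 0 ≤ r / 2 - (r / 2) ^ 3 / 4 := by nlinarith [h4r]
      have hcr : Real.cos r = 1 - 2 * Real.sin (r / 2) ^ 2 := by
        have h := Real.sin_sq_eq_half_sub (r / 2)
        rw [show 2 * (r / 2) = r by ring] at h
        linarith
      have hb : Real.cos r ≤ 1 - 2 * (r / 2 - (r / 2) ^ 3 / 4) ^ 2 := by
        nlinarith [hs2, hpos]
      have key := psk_poly r π hπl hr0 hru hπu
      have hu : u = (π - r) / 2 := by rw [hrdef]; ring
      rw [h2u, hu]
      linarith [hb, key]

/-- Key discrete bound: `4 sin²(mπ/2^h) ≤ 2^h sin²(π/2^h) m` for `2m ≤ 2^h`. -/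
lemma psk_key (h m : ℕ) (hh : 2 ≤ h) (hm : 2 * m ≤ 2 ^ h) :
    4 * Real.sin ((m : ℝ) * π / 2 ^ h) ^ 2 ≤ 2 ^ h * Real.sin (π / 2 ^ h) ^ 2 * m := by
  have hs2 : Real.sqrt 2 ^ 2 = 2 := Real.sq_sqrt (by norm_num)
  have hs2' : (0 : ℝ) ≤ Real.sqrt 2 := Real.sqrt_nonneg 2
  rcases Nat.lt_or_ge h 4 with h4 | h4
  · interval_cases h
    · -- h = 2
      have hv : Real.sin (π / 4) ^ 2 = 1 / 2 := by
        rw [Real.sin_pi_div_four, div_pow, hs2]; norm_num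
      have hbase : π / (2:ℝ) ^ 2 = π / 4 := by norm_num
      have hm2 : m ≤ 2 := by omega
      interval_cases m
      · simp
      · rw [show ((1:ℕ):ℝ) * π / (2:ℝ) ^ 2 = π / 4 by push_cast; ring, hbase, hv]
        push_cast; norm_num
      · rw [show ((2:ℕ):ℝ) * π / (2:ℝ) ^ 2 = π / 2 by push_cast; ring, hbase,
          Real.sin_pi_div_two, hv]
        push_cast; norm_num
    · -- h = 3
      have hv1 : Real.sin (π / 8) ^ 2 = 1 / 2 - Real.sqrt 2 / 4 := by
        rw [Real.sin_sq_eq_half_sub, show (2:ℝ) * (π/8) = π/4 by ring,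
          Real.cos_pi_div_four]; ring
      have hv3 : Real.sin (3 * π / 8) ^ 2 = 1 / 2 + Real.sqrt 2 / 4 := by
        rw [Real.sin_sq_eq_half_sub, show (2:ℝ) * (3*π/8) = π - π/4 by ring,
          Real.cos_pi_sub, Real.cos_pi_div_four]; ring
      have hv2 : Real.sin (π / 4) ^ 2 = 1 / 2 := by
        rw [Real.sin_pi_div_four, div_pow, hs2]; norm_num
      have hbase : π / (2:ℝ) ^ 3 = π / 8 := by norm_num
      have hm4 : m ≤ 4 := by omega
      interval_cases m
      · simp
      · rw [show ((1:ℕ):ℝ) * π / (2:ℝ) ^ 3 = π / 8 by push_cast; ring, hbase, hv1]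
        push_cast; nlinarith
      · rw [show ((2:ℕ):ℝ) * π / (2:ℝ) ^ 3 = π / 4 by push_cast; ring, hbase, hv2, hv1]
        push_cast; nlinarith [sq_nonneg (Real.sqrt 2 - 3/2)]
      · rw [show ((3:ℕ):ℝ) * π / (2:ℝ) ^ 3 = 3 * π / 8 by push_cast; ring, hbase, hv3, hv1]
        push_cast; nlinarith [sq_nonneg (7 * Real.sqrt 2 - 10)]
      · rw [show ((4:ℕ):ℝ) * π / (2:ℝ) ^ 3 = π / 2 by push_cast; ring, hbase,
          Real.sin_pi_div_two, hv1]
        push_cast; nlinarith [sq_nonneg (Real.sqrt 2 - 3/2)]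
  · -- h ≥ 4
    have hπl : (3.1415 : ℝ) < π := Real.pi_gt_d4
    have hπu : π < 3.1416 := Real.pi_lt_d4
    have hN : (16 : ℝ) ≤ 2 ^ h := by
      calc (16:ℝ) = 2 ^ 4 := by norm_num
      _ ≤ 2 ^ h := by exact_mod_cast Nat.pow_le_pow_right (by norm_num) h4
    have hNpos : (0:ℝ) < 2 ^ h := by positivity
    rcases Nat.eq_zero_or_pos m with rfl | hm1
    · simp
    have hmN : (m : ℝ) ≤ 2 ^ h / 2 := by
      have : (2 * m : ℝ) ≤ 2 ^ h := by exact_mod_cast hm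
      linarith
    have hu0 : 0 ≤ (m : ℝ) * π / 2 ^ h := by positivity
    have huπ : (m : ℝ) * π / 2 ^ h ≤ π / 2 := by
      rw [div_le_div_iff₀ hNpos (by norm_num : (0:ℝ) < 2)]
      nlinarith [Real.pi_pos]
    have L1 := psk_sin_sq_le _ hu0 huπ
    set t := π / 2 ^ h with htdef
    have ht0 : 0 < t := by positivity
    have htsmall : t ≤ 1/5 := by
      rw [htdef, div_le_iff₀ hNpos]; nlinarith
    have hcube : t - t ^ 3 / 4 < Real.sin t :=
      by have := Real.sin_gt_sub_cube ht0; nlinarith [pow_pos ht0 3]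
    have htt : 0 ≤ t * (1/25 - t ^ 2) :=
      mul_nonneg ht0.le (by nlinarith)
    have h99 : (99/100 : ℝ) * t ≤ Real.sin t := by nlinarith [htt]
    have hsq : (9801/10000 : ℝ) * t ^ 2 ≤ Real.sin t ^ 2 := by nlinarith [h99, ht0]
    have hNt : (2:ℝ) ^ h * t = π := by
      rw [htdef]; field_simp
    have hut : (m : ℝ) * π / 2 ^ h = (m : ℝ) * t := by
      rw [htdef]; ring
    rw [hut] at L1 ⊢
    have htm : (0:ℝ) ≤ t * m := mul_nonneg ht0.le (Nat.cast_nonneg m)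
    calc 4 * Real.sin ((m:ℝ) * t) ^ 2 ≤ 76/25 * (t * (m:ℝ)) := by linarith
    _ ≤ 9801/10000 * π * (t * (m:ℝ)) :=
        mul_le_mul_of_nonneg_right (by nlinarith : (76/25:ℝ) ≤ 9801/10000 * π) htm
    _ = 2 ^ h * (9801/10000 * t ^ 2) * (m:ℝ) := by rw [← hNt]; ring
    _ ≤ 2 ^ h * Real.sin t ^ 2 * m := by
        nlinarith [mul_le_mul_of_nonneg_left hsq
          (by positivity : (0:ℝ) ≤ 2 ^ h * (m:ℝ))]

theorem psk_dist_eq_and_lee_bound (h : ℕ) (hh : 2 ≤ h) (a b : ZMod (2 ^ h)) :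
    ‖Complex.exp (2 * π * Complex.I * (a.val : ℂ) / 2 ^ h) -
        Complex.exp (2 * π * Complex.I * (b.val : ℂ) / 2 ^ h)‖ ^ 2 =
      4 * Real.sin (((a - b).val : ℝ) * π / 2 ^ h) ^ 2 ∧
    4 * Real.sin (((a - b).val : ℝ) * π / 2 ^ h) ^ 2 ≤
      2 ^ h * Real.sin (π / 2 ^ h) ^ 2 *
        (min (a - b).val (2 ^ h - (a - b).val) : ℕ) := by
  haveI : NeZero (2 ^ h) := ⟨pow_ne_zero h two_ne_zero⟩
  set va := a.val with hva
  set vb := b.val with hvb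
  set w := (a - b).val with hwdef
  have hw : w < 2 ^ h := ZMod.val_lt _
  constructor
  · -- distance formula
    have hzm : (((va : ℤ) - vb - w : ℤ) : ZMod (2 ^ h)) = 0 := by
      push_cast
      simp only [hva, hvb, hwdef, ZMod.natCast_val, ZMod.cast_id]
      ring
    have hdvd : ((2 ^ h : ℕ) : ℤ) ∣ ((va : ℤ) - vb - w) :=
      (ZMod.intCast_zmod_eq_zero_iff_dvd _ _).mp hzm
    obtain ⟨k, hk⟩ := hdvd
    set A := 2 * π * (va : ℝ) / 2 ^ h with hA
    set B := 2 * π * (vb : ℝ) / 2 ^ h with hB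
    have e1 : 2 * π * Complex.I * (va : ℂ) / 2 ^ h = (A : ℂ) * Complex.I := by
      rw [hA]; push_cast; ring
    have e2 : 2 * π * Complex.I * (vb : ℂ) / 2 ^ h = (B : ℂ) * Complex.I := by
      rw [hB]; push_cast; ring
    rw [e1, e2, Complex.exp_mul_I, Complex.exp_mul_I]
    rw [show Complex.cos (A:ℂ) = ((Real.cos A : ℝ) : ℂ) from (Complex.ofReal_cos A).symm,
      show Complex.sin (A:ℂ) = ((Real.sin A : ℝ) : ℂ) from (Complex.ofReal_sin A).symm,
      show Complex.cos (B:ℂ) = ((Real.cos B : ℝ) : ℂ) from (Complex.ofReal_cos B).symm,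
      show Complex.sin (B:ℂ) = ((Real.sin B : ℝ) : ℂ) from (Complex.ofReal_sin B).symm]
    have e3 : ((Real.cos A : ℝ) : ℂ) + ((Real.sin A : ℝ) : ℂ) * Complex.I -
        (((Real.cos B : ℝ) : ℂ) + ((Real.sin B : ℝ) : ℂ) * Complex.I) =
        ((Real.cos A - Real.cos B : ℝ) : ℂ) +
          ((Real.sin A - Real.sin B : ℝ) : ℂ) * Complex.I := by
      push_cast; ring
    rw [e3, Complex.sq_norm, Complex.normSq_add_mul_I]
    have hk' : (va : ℝ) - vb - w = 2 ^ h * k := by exact_mod_cast hk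
    have hNne : ((2:ℝ) ^ h) ≠ 0 := by positivity
    have hAB : A - B = 2 * ((w : ℝ) * π / 2 ^ h) + (k : ℝ) * (2 * π) := by
      rw [hA, hB]
      field_simp
      linear_combination hk'
    have hc : Real.cos (A - B) = Real.cos (2 * ((w : ℝ) * π / 2 ^ h)) := by
      rw [hAB]
      exact_mod_cast Real.cos_add_int_mul_two_pi (2 * ((w : ℝ) * π / 2 ^ h)) k
    have hcs := Real.cos_sub A B
    have hhalf := Real.sin_sq_eq_half_sub ((w : ℝ) * π / 2 ^ h)
    have hA2 := Real.sin_sq_add_cos_sq A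
    have hB2 := Real.sin_sq_add_cos_sq B
    linear_combination hA2 + hB2 + 2 * hcs - 2 * hc - 4 * hhalf
  · -- Lee bound
    rcases le_or_gt (2 * w) (2 ^ h) with hle | hgt
    · rw [min_eq_left (by omega : w ≤ 2 ^ h - w)]
      exact psk_key h w hh hle
    · rw [min_eq_right (by omega : 2 ^ h - w ≤ w)]
      have harg : Real.sin ((w : ℝ) * π / 2 ^ h) =
          Real.sin (((2 ^ h - w : ℕ) : ℝ) * π / 2 ^ h) := by
        have hcast : ((2 ^ h - w : ℕ) : ℝ) = (2 : ℝ) ^ h - w := by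
          rw [Nat.cast_sub hw.le]; push_cast; ring
        have hNne : ((2:ℝ) ^ h) ≠ 0 := by positivity
        rw [hcast, show ((2:ℝ) ^ h - w) * π / 2 ^ h = π - (w : ℝ) * π / 2 ^ h by
          field_simp, Real.sin_pi_sub]
      rw [harg]
      exact psk_key h (2 ^ h - w) hh (by omega)
end

section
/- Let B ⊆ (ℤ/2)^n be a nonempty binary code with covering radius ρ(B) ≤ n/2. Then for every offset w ∈ (ℤ/2)^n and every permutation σ of {0,…,n−1}, the maximum over b ∈ B of PMEPR(σ(b)+w) is at least (1/n)·(n − 2ρ(B))², where PMEPR(c) = (1/n)·sup_{0≤θ<1} |Σ_i (−1)^{c_i} e^{2πi·iθ}|². -/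
open Real Complex Finset

/-- Hamming weight of a binary word. -/
def wtH {n : ℕ} (c : Fin n → ZMod 2) : ℕ := (Finset.univ.filter fun i => c i ≠ 0).card

/-- Covering radius of a nonempty binary code. -/
def covRad {n : ℕ} (B : Finset (Fin n → ZMod 2)) (hB : B.Nonempty) : ℕ :=
  Finset.univ.sup fun x => B.inf' hB fun b => wtH (b + x)

/-- PMEPR of a binary word (BPSK-modulated OFDM signal). -/
noncomputable def PMEPR {n : ℕ} (c : Fin n → ZMod 2) : ℝ :=
  (1 / n) * sSup ((fun θ : ℝ =>
    ‖(∑ i : Fin n, (if c i = 0 then 1 else -1 : ℂ) *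
      Complex.exp (2 * π * Complex.I * (i : ℕ) * θ))‖ ^ 2) '' Set.Ico 0 1)

lemma sum_pm {n : ℕ} (c : Fin n → ZMod 2) :
    ∑ i : Fin n, (if c i = 0 then 1 else -1 : ℂ) = (n : ℂ) - 2 * (wtH c : ℂ) := by
  have h : ∀ i : Fin n, (if c i = 0 then (1 : ℂ) else -1)
      = 1 - 2 * (if c i ≠ 0 then 1 else 0) := by
    intro i; by_cases h : c i = 0 <;> simp [h] <;> ring
  rw [Finset.sum_congr rfl fun i _ => h i, Finset.sum_sub_distrib, ← Finset.mul_sum,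
    Finset.sum_boole, Finset.sum_const, Finset.card_univ]
  simp [wtH]

lemma wtH_perm {n : ℕ} (σ : Equiv.Perm (Fin n)) (c : Fin n → ZMod 2) :
    wtH (fun i => c (σ i)) = wtH c := by
  unfold wtH
  apply Finset.card_bij (fun i _ => σ i)
  · intro a ha; simpa using (Finset.mem_filter.mp ha).2
  · intro a _ b _ hab; exact σ.injective hab
  · intro b hb
    exact ⟨σ.symm b, by simpa using (Finset.mem_filter.mp hb).2, by simp⟩

lemma abs_exp_unit (k : ℕ) (θ : ℝ) :
    ‖Complex.exp (2 * π * Complex.I * k * θ)‖ = 1 := by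
  rw [Complex.norm_exp]
  have : (2 * ↑π * Complex.I * (k : ℂ) * (θ : ℂ)).re = 0 := by
    simp [Complex.mul_re, Complex.mul_im]
  rw [this, Real.exp_zero]

lemma bdd {n : ℕ} (c : Fin n → ZMod 2) :
    BddAbove ((fun θ : ℝ =>
      ‖∑ i : Fin n, (if c i = 0 then 1 else -1 : ℂ) *
        Complex.exp (2 * π * Complex.I * (i : ℕ) * θ)‖ ^ 2) '' Set.Ico 0 1) := by
  refine ⟨(n : ℝ) ^ 2, ?_⟩
  rintro y ⟨θ, -, rfl⟩
  have h1 : ‖∑ i : Fin n, (if c i = 0 then 1 else -1 : ℂ) *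
      Complex.exp (2 * π * Complex.I * (i : ℕ) * θ)‖ ≤ (n : ℝ) := by
    calc ‖∑ i : Fin n, (if c i = 0 then 1 else -1 : ℂ) *
        Complex.exp (2 * π * Complex.I * (i : ℕ) * θ)‖
        ≤ ∑ i : Fin n, ‖(if c i = 0 then 1 else -1 : ℂ) *
          Complex.exp (2 * π * Complex.I * (i : ℕ) * θ)‖ := by
          exact norm_sum_le _ _
      _ ≤ ∑ _i : Fin n, (1 : ℝ) := by
          apply Finset.sum_le_sum; intro i _
          rw [norm_mul, abs_exp_unit]
          split_ifs <;> simp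
      _ = (n : ℝ) := by simp
  exact pow_le_pow_left₀ (norm_nonneg _) h1 2

lemma key {n : ℕ} (c : Fin n → ZMod 2) :
    (1 / n) * ((n : ℝ) - 2 * wtH c) ^ 2 ≤ PMEPR c := by
  unfold PMEPR
  apply mul_le_mul_of_nonneg_left _ (by positivity)
  have hmem : ((n : ℝ) - 2 * wtH c) ^ 2 ∈ ((fun θ : ℝ =>
      ‖∑ i : Fin n, (if c i = 0 then 1 else -1 : ℂ) *
        Complex.exp (2 * π * Complex.I * (i : ℕ) * θ)‖ ^ 2) '' Set.Ico 0 1) := by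
    refine ⟨0, by simp, ?_⟩
    beta_reduce
    have : ∑ i : Fin n, (if c i = 0 then 1 else -1 : ℂ) *
        Complex.exp (2 * π * Complex.I * (i : ℕ) * (0 : ℝ)) =
        ∑ i : Fin n, (if c i = 0 then 1 else -1 : ℂ) := by
      apply Finset.sum_congr rfl; intro i _; simp
    rw [this, sum_pm]
    have : ((n : ℂ) - 2 * (wtH c : ℂ)) = (((n : ℝ) - 2 * wtH c : ℝ) : ℂ) := by
      push_cast; ring
    rw [this, Complex.norm_real, Real.norm_eq_abs]; exact sq_abs _
  exact le_csSup (bdd c) hmem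

theorem pmepr_lower_bound_binary (n : ℕ) (hn : 0 < n) (B : Finset (Fin n → ZMod 2))
    (hB : B.Nonempty) (hρ : 2 * covRad B hB ≤ n)
    (w : Fin n → ZMod 2) (σ : Equiv.Perm (Fin n)) :
    (1 / n) * ((n : ℝ) - 2 * covRad B hB) ^ 2 ≤
      B.sup' hB fun b => PMEPR (fun i => b (σ i) + w i) := by
  set x : Fin n → ZMod 2 := fun j => w (σ.symm j) with hx
  have h1 : B.inf' hB (fun b => wtH (b + x)) ≤ covRad B hB :=
    Finset.le_sup (f := fun x => B.inf' hB fun b => wtH (b + x)) (Finset.mem_univ x)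
  obtain ⟨b, hbB, hb⟩ := (Finset.inf'_le_iff hB).mp h1
  have hwt : wtH (fun i => b (σ i) + w i) = wtH (b + x) := by
    have : (fun i => b (σ i) + w i) = fun i => (b + x) (σ i) := by
      funext i; simp [hx, Pi.add_apply]
    rw [this, wtH_perm]
  have hwle : wtH (fun i => b (σ i) + w i) ≤ covRad B hB := hwt ▸ hb
  refine le_trans ?_ (Finset.le_sup' _ hbB)
  refine le_trans ?_ (key _)
  apply mul_le_mul_of_nonneg_left _ (by positivity)
  apply pow_le_pow_left₀
  · have : (2 * covRad B hB : ℝ) ≤ n := by exact_mod_cast hρ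
    linarith
  · have : (wtH (fun i => b (σ i) + w i) : ℝ) ≤ covRad B hB := by exact_mod_cast hwle
    linarith
end
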